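/- Let q ∈ [0,1] and let y be a computable sequence with infinitely many 1's. If x is Martin-Löf random with respect to the Bernoulli(q) measure relative to q, then the selected subsequence x/y is also Martin-Löf random with respect to the Bernoulli(q) measure relative to q. -/

import Mathlib

open MeasureTheory Filter

/-- Cylinder set of infinite binary sequences extending the finite string `s`. -/
def cyl (s : List Bool) : Set (ℕ → Bool) := {x | ∀ i : Fin s.length, x i.val = s.get i}

/-- The length-`n` prefix of the infinite sequence `y`. -/
def pre (y : ℕ → Bool) (n : ℕ) : List Bool := List.ofFn (fun i : Fin n => y i.val)

/-- `select x y` is the subsequence `x/y` of `x` at positions `i` with `y i = true`. -/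
noncomputable def select (x y : ℕ → Bool) : ℕ → Bool :=
  fun n => x (Nat.nth (fun i => y i = true) n)

/-- Subsequence of a finite string `s` at the positions where `t` is `true`. -/
def selStr (s t : List Bool) : List Bool :=
  ((List.zip s t).filter (fun p => p.2)).map Prod.fst

/-- `s` is a prefix of the infinite sequence `f`. -/
def IsPrefixSeq (s : List Bool) (f : ℕ → Bool) : Prop :=
  ∀ i : Fin s.length, f i.val = s.get i

/-- Open set determined by level `n` of a test. -/
def openU (U : ℕ → Set (List Bool)) (n : ℕ) : Set (ℕ → Bool) := ⋃ s ∈ U n, cyl s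

/-- Martin-Löf test with respect to the measure `μ`. -/
def MLTest (μ : Measure (ℕ → Bool)) (U : ℕ → Set (List Bool)) : Prop :=
  REPred (fun p : ℕ × List Bool => p.2 ∈ U p.1) ∧
  (∀ n, openU U (n + 1) ⊆ openU U n) ∧
  (∀ n, μ (openU U n) < (2 : ENNReal)⁻¹ ^ n)

/-- `x` is Martin-Löf random w.r.t. `μ`: it passes every ML test. -/
def MLRandom (μ : Measure (ℕ → Bool)) (x : ℕ → Bool) : Prop :=
  ∀ U : ℕ → Set (List Bool), MLTest μ U → ∃ n, x ∉ openU U n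

/-- `μ` is a computable measure. -/
def ComputableMeasure (μ : Measure (ℕ → Bool)) : Prop :=
  ∃ A : List Bool → ℕ → ℚ, Computable₂ A ∧
    ∀ s k, |(μ (cyl s)).toReal - (A s k : ℝ)| < 1 / (k + 1)

/-- The uniform (fair-coin) measure, characterized on cylinders. -/
def IsUniform (μ : Measure (ℕ → Bool)) : Prop :=
  ∀ s : List Bool, μ (cyl s) = (2 : ENNReal)⁻¹ ^ s.length

/-- The first `m` dyadic approximations `⌊q·2^i⌋` of the real oracle `q`. -/
noncomputable def oracleList (q : ℝ) (m : ℕ) : List ℤ :=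
  List.ofFn (fun i : Fin m => ⌊q * 2 ^ i.val⌋)

/-- `U` is recursively enumerable relative to the real oracle `q`: it is enumerated
by an r.e. predicate with access to finitely many approximations of `q`. -/
def RePredIn (q : ℝ) (U : ℕ × List Bool → Prop) : Prop :=
  ∃ V : List ℤ × (ℕ × List Bool) → Prop, REPred V ∧
    ∀ p, U p ↔ ∃ m, V (oracleList q m, p)

/-- Martin-Löf test w.r.t. `μ`, relative to the oracle `q`. -/
def MLTestRel (q : ℝ) (μ : MeasureTheory.Measure (ℕ → Bool))
    (U : ℕ → Set (List Bool)) : Prop :=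
  RePredIn q (fun p => p.2 ∈ U p.1) ∧
  (∀ n, openU U (n + 1) ⊆ openU U n) ∧
  (∀ n, μ (openU U n) < (2 : ENNReal)⁻¹ ^ n)

/-- `x` is ML-random w.r.t. `μ` relative to the oracle `q`. -/
def MLRandomRel (q : ℝ) (μ : MeasureTheory.Measure (ℕ → Bool)) (x : ℕ → Bool) : Prop :=
  ∀ U : ℕ → Set (List Bool), MLTestRel q μ U → ∃ n, x ∉ openU U n

/-- `μ` is the i.i.d. Bernoulli(`q`) measure, characterized on cylinders. -/
def IsBernoulli (q : ℝ) (μ : MeasureTheory.Measure (ℕ → Bool)) : Prop :=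
  ∀ s : List Bool,
    μ (cyl s) = ENNReal.ofReal (q ^ (s.count true) * (1 - q) ^ (s.count false))

namespace S12

lemma getD_eq_get' {α : Type*} (l : List α) (d : α) {n : ℕ} (hn : n < l.length) :
    l.getD n d = l.get ⟨n, hn⟩ := List.getD_eq_getElem _ _ hn

@[simp] lemma pre_length (z : ℕ → Bool) (n : ℕ) : (pre z n).length = n := by simp [pre]

lemma pre_get (z : ℕ → Bool) (n : ℕ) (i : Fin (pre z n).length) :
    (pre z n).get i = z i.val := by rw [List.get_eq_getElem]; simp [pre]

@[simp] lemma pre_zero (z : ℕ → Bool) : pre z 0 = [] := rfl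

lemma pre_succ (z : ℕ → Bool) (n : ℕ) : pre z (n + 1) = pre z n ++ [z n] := by
  simp only [pre, List.ofFn_succ', Fin.val_last, Fin.coe_castSucc, List.concat_eq_append]

lemma mem_cyl_pre (x : ℕ → Bool) (n : ℕ) : x ∈ cyl (pre x n) := by
  intro i
  rw [pre_get]

lemma eq_pre_of_mem_cyl {x : ℕ → Bool} {s : List Bool} (h : x ∈ cyl s) :
    s = pre x s.length := by
  apply List.ext_get (by simp)
  intro i h1 h2
  have := h ⟨i, h1⟩
  rw [pre_get]
  exact this.symm

lemma pre_getD {x : ℕ → Bool} {m j : ℕ} (h : j < m) :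
    (pre x m).getD j false = x j := by
  rw [getD_eq_get' _ _ (by simpa using h), pre_get]

@[simp] lemma cyl_nil : cyl [] = Set.univ := by
  ext x; simp only [cyl, List.length_nil, Set.mem_setOf_eq, Set.mem_univ, iff_true]
  intro i; exact absurd i.isLt (by simp)

def hsel (y : ℕ → Bool) (t : List Bool) (k : ℕ) : List Bool :=
  Nat.rec [] (fun j ih => bif y j then ih ++ [t.getD j false] else ih) k

@[simp] lemma hsel_zero (y : ℕ → Bool) (t : List Bool) : hsel y t 0 = [] := rfl

lemma hsel_succ (y : ℕ → Bool) (t : List Bool) (k : ℕ) :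
    hsel y t (k + 1) = bif y k then hsel y t k ++ [t.getD k false] else hsel y t k := rfl

variable {y : ℕ → Bool}

lemma hsel_pre (hyinf : {i | y i = true}.Infinite) (x : ℕ → Bool) {m k : ℕ} (hk : k ≤ m) :
    hsel y (pre x m) k = pre (select x y) (Nat.count (fun i => y i = true) k) := by
  induction k with
  | zero => simp
  | succ k ih =>
    have hkm : k < m := hk
    rw [hsel_succ, ih hkm.le, Nat.count_succ]
    by_cases hy : y k = true
    · rw [hy]
      have hx : x k = select x y (Nat.count (fun i => y i = true) k) := by
        unfold select
        rw [Nat.nth_count hy]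
      simp only [cond_true, if_pos (show y k = true from hy), pre_getD hkm, hx]
      simp [pre_succ]
    · rw [Bool.not_eq_true] at hy
      rw [hy]
      simp [hy]


lemma pre_eq_of_mem_cyl {x : ℕ → Bool} {s : List Bool} (h : x ∈ cyl s) :
    pre x s.length = s := (eq_pre_of_mem_cyl h).symm

lemma count_nth_add_one (hyinf : {i | y i = true}.Infinite) (c : ℕ) :
    Nat.count (fun i => y i = true) (Nat.nth (fun i => y i = true) c + 1) = c + 1 := by
  rw [Nat.count_succ, Nat.count_nth_of_infinite hyinf,
    if_pos (Nat.nth_mem_of_infinite hyinf c)]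

lemma openV_eq (hyinf : {i | y i = true}.Infinite) (U : ℕ → Set (List Bool)) (n : ℕ) :
    openU (fun k => {t : List Bool | hsel y t t.length ∈ U k}) n
      = (fun x => select x y) ⁻¹' openU U n := by
  ext x
  simp only [openU, Set.mem_iUnion, Set.mem_preimage, Set.mem_setOf_eq]
  constructor
  · rintro ⟨t, ht, hxt⟩
    have e := eq_pre_of_mem_cyl hxt
    rw [e] at ht
    simp only [pre_length] at ht
    rw [hsel_pre hyinf x le_rfl] at ht
    exact ⟨_, ht, mem_cyl_pre _ _⟩
  · rintro ⟨s, hs, hxs⟩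
    rcases eq_or_ne s [] with rfl | hne
    · exact ⟨[], by simpa using hs, by simp⟩
    · obtain ⟨c, hc⟩ : ∃ c, s.length = c + 1 :=
        Nat.exists_eq_succ_of_ne_zero (by simpa using hne)
      refine ⟨pre x (Nat.nth (fun i => y i = true) c + 1), ?_, mem_cyl_pre _ _⟩
      rw [pre_length, hsel_pre hyinf x le_rfl, count_nth_add_one hyinf, ← hc,
        pre_eq_of_mem_cyl hxs]
      exact hs


lemma measurableSet_cyl (s : List Bool) : MeasurableSet (cyl s) := by
  have : cyl s = ⋂ i : Fin s.length, (fun x : ℕ → Bool => x i.val) ⁻¹' {s.get i} := by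
    ext x; simp [cyl]
  rw [this]
  exact MeasurableSet.iInter fun i =>
    (measurable_pi_apply i.val) (measurableSet_singleton _)

lemma measurable_select : Measurable fun x : ℕ → Bool => select x y :=
  measurable_pi_lambda _ fun n => measurable_pi_apply _

lemma measurableSet_openU (U : ℕ → Set (List Bool)) (n : ℕ) :
    MeasurableSet (openU U n) :=
  MeasurableSet.biUnion (Set.to_countable _) fun s _ => measurableSet_cyl s

lemma cyl_pre_anti (x : ℕ → Bool) {a b : ℕ} (h : a ≤ b) :
    cyl (pre x b) ⊆ cyl (pre x a) := by
  intro z hz i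
  have hi : (i : ℕ) < b := lt_of_lt_of_le (by simpa using i.isLt) h
  have := hz ⟨i.val, by simpa using hi⟩
  rw [pre_get] at this ⊢
  exact this

def CylSets : Set (Set (ℕ → Bool)) := {S | ∃ s : List Bool, S = cyl s}

lemma isPiSystem_cylSets : IsPiSystem CylSets := by
  rintro _ ⟨s, rfl⟩ _ ⟨t, rfl⟩ ⟨x, hxs, hxt⟩
  have es := eq_pre_of_mem_cyl hxs
  have et := eq_pre_of_mem_cyl hxt
  rcases le_total s.length t.length with h | h
  · refine ⟨t, ?_⟩
    apply Set.Subset.antisymm (Set.inter_subset_right)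
    intro z hz
    refine ⟨?_, hz⟩
    rw [es]; rw [et] at hz
    exact cyl_pre_anti x h hz
  · refine ⟨s, ?_⟩
    apply Set.Subset.antisymm (Set.inter_subset_left)
    intro z hz
    refine ⟨hz, ?_⟩
    rw [et]; rw [es] at hz
    exact cyl_pre_anti x h hz

lemma coord_mem_generateFrom (i : ℕ) (b : Bool) :
    MeasurableSet[MeasurableSpace.generateFrom CylSets] {x : ℕ → Bool | x i = b} := by
  have : {x : ℕ → Bool | x i = b}
      = ⋃ t : {l : List Bool // l.length = i}, cyl (t.val ++ [b]) := by
    ext x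
    simp only [Set.mem_setOf_eq, Set.mem_iUnion]
    constructor
    · intro hx
      refine ⟨⟨pre x i, pre_length x i⟩, ?_⟩
      have : pre x i ++ [b] = pre (Function.update x i b) (i + 1) := by
        rw [pre_succ]
        congr 1
        · simp only [pre]
          congr 1
          funext j
          exact (Function.update_of_ne (Nat.ne_of_lt j.isLt) _ _).symm
        · simp
      rw [this]
      intro j
      rw [pre_get]
      rcases eq_or_ne (j : ℕ) i with hj | hj
      · rw [hj, Function.update_self, hx]
      · have hji : (j : ℕ) < i + 1 := by simpa using j.isLt
        rw [Function.update_of_ne hj]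
    · rintro ⟨⟨t, ht⟩, hx⟩
      have := hx ⟨i, by simp [ht]⟩
      simpa [ht] using this
  rw [this]
  exact MeasurableSet.iUnion fun t =>
    MeasurableSpace.measurableSet_generateFrom ⟨_, rfl⟩

lemma generateFrom_cylSets :
    (inferInstance : MeasurableSpace (ℕ → Bool)) = MeasurableSpace.generateFrom CylSets := by
  apply le_antisymm
  · rw [show (inferInstance : MeasurableSpace (ℕ → Bool)) = MeasurableSpace.pi from rfl,
      MeasurableSpace.pi]
    apply iSup_le
    intro i
    rw [MeasurableSpace.le_def]
    rintro S ⟨t, -, rfl⟩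
    have : (fun x : ℕ → Bool => x i) ⁻¹' t = ⋃ b ∈ t, {x : ℕ → Bool | x i = b} := by
      ext x; simp
    rw [this]
    exact MeasurableSet.biUnion (Set.to_countable _) fun b _ => coord_mem_generateFrom i b
  · exact MeasurableSpace.generateFrom_le (by rintro _ ⟨s, rfl⟩; exact measurableSet_cyl s)


def Con (p : List (Option Bool)) : Set (ℕ → Bool) :=
  {x | ∀ i : Fin p.length, ∀ b : Bool, p.get i = some b → x i.val = b}

def comps : List (Option Bool) → List (List Bool)
  | [] => [[]]
  | some b :: p => (comps p).map (b :: ·)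
  | none :: p => (comps p).map (true :: ·) ++ (comps p).map (false :: ·)

lemma length_of_mem_comps : ∀ {p : List (Option Bool)} {t : List Bool},
    t ∈ comps p → t.length = p.length := by
  intro p
  induction p with
  | nil => intro t ht; simp [comps] at ht; simp [ht]
  | cons o p ih =>
    intro t ht
    match o with
    | some b =>
      simp only [comps, List.mem_map] at ht
      obtain ⟨u, hu, rfl⟩ := ht
      simp [ih hu]
    | none =>
      simp only [comps, List.mem_append, List.mem_map] at ht
      rcases ht with ⟨u, hu, rfl⟩ | ⟨u, hu, rfl⟩ <;> simp [ih hu]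

lemma cons_inj (b : Bool) : Function.Injective (fun t : List Bool => b :: t) := by
  intro a b h; simpa using h

lemma nodup_comps : ∀ p : List (Option Bool), (comps p).Nodup := by
  intro p
  induction p with
  | nil => simp [comps]
  | cons o p ih =>
    match o with
    | some b => exact ih.map (cons_inj b)
    | none =>
      refine List.Nodup.append (ih.map (cons_inj true)) (ih.map (cons_inj false)) ?_
      intro t h1 h2
      simp only [List.mem_map] at h1 h2
      obtain ⟨u, -, rfl⟩ := h1
      obtain ⟨v, -, hv⟩ := h2
      exact Bool.noConfusion (List.head_eq_of_cons_eq hv)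

lemma mem_cyl_cons {x : ℕ → Bool} {b : Bool} {t : List Bool} :
    x ∈ cyl (b :: t) ↔ x 0 = b ∧ (fun n => x (n + 1)) ∈ cyl t := by
  constructor
  · intro h
    refine ⟨h ⟨0, by simp⟩, fun i => ?_⟩
    have := h ⟨i.val + 1, by simpa using i.isLt⟩
    simpa using this
  · rintro ⟨h0, ht⟩ i
    rcases i with ⟨_ | j, hj⟩
    · simpa using h0
    · have := ht ⟨j, by simpa using hj⟩
      simpa using this

lemma mem_Con_cons {x : ℕ → Bool} {o : Option Bool} {p : List (Option Bool)} :
    x ∈ Con (o :: p) ↔ (∀ b : Bool, o = some b → x 0 = b) ∧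
      (fun n => x (n + 1)) ∈ Con p := by
  constructor
  · intro h
    refine ⟨fun b hb => h ⟨0, by simp⟩ b (by simpa using hb), fun i b hb => ?_⟩
    have := h ⟨i.val + 1, by simpa using i.isLt⟩ b (by simpa using hb)
    simpa using this
  · rintro ⟨h0, hp⟩ ⟨_ | j, hj⟩ b hb
    · exact h0 b (by simpa using hb)
    · have := hp ⟨j, by simpa using hj⟩ b (by simpa using hb)
      simpa using this

lemma mem_Con_iff {p : List (Option Bool)} {x : ℕ → Bool} :
    x ∈ Con p ↔ ∃ t ∈ comps p, x ∈ cyl t := by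
  induction p generalizing x with
  | nil =>
    simp only [comps, List.mem_singleton]
    constructor
    · intro _; exact ⟨[], rfl, by simp⟩
    · intro _ i; exact absurd i.isLt (by simp)
  | cons o p ih =>
    match o with
    | some b =>
      rw [mem_Con_cons]
      simp only [comps, List.mem_map]
      constructor
      · rintro ⟨h0, hp⟩
        obtain ⟨t, ht, hxt⟩ := ih.mp hp
        exact ⟨b :: t, ⟨t, ht, rfl⟩, mem_cyl_cons.mpr ⟨h0 b rfl, hxt⟩⟩
      · rintro ⟨_, ⟨t, ht, rfl⟩, hxt⟩
        obtain ⟨h0, hxt'⟩ := mem_cyl_cons.mp hxt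
        exact ⟨fun c hc => by cases hc; exact h0, ih.mpr ⟨t, ht, hxt'⟩⟩
    | none =>
      rw [mem_Con_cons]
      simp only [comps, List.mem_append, List.mem_map]
      constructor
      · rintro ⟨-, hp⟩
        obtain ⟨t, ht, hxt⟩ := ih.mp hp
        cases hb : x 0 with
        | true => exact ⟨true :: t, Or.inl ⟨t, ht, rfl⟩, mem_cyl_cons.mpr ⟨hb, hxt⟩⟩
        | false => exact ⟨false :: t, Or.inr ⟨t, ht, rfl⟩, mem_cyl_cons.mpr ⟨hb, hxt⟩⟩
      · rintro ⟨u, (⟨t, ht, rfl⟩ | ⟨t, ht, rfl⟩), hxt⟩ <;>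
          exact ⟨fun c hc => (nomatch hc),
            ih.mpr ⟨_, ht, (mem_cyl_cons.mp hxt).2⟩⟩

lemma Con_eq_biUnion (p : List (Option Bool)) :
    Con p = ⋃ t ∈ {l : List Bool | l ∈ comps p}, cyl t := by
  ext x
  simp only [Set.mem_iUnion, Set.mem_setOf_eq, mem_Con_iff]
  tauto

lemma cyl_disjoint {t u : List Bool} (hlen : t.length = u.length) (hne : t ≠ u) :
    Disjoint (cyl t) (cyl u) := by
  rw [Set.disjoint_iff_inter_eq_empty]
  by_contra h
  obtain ⟨x, hxt, hxu⟩ := Set.nonempty_iff_ne_empty.mpr h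
  exact hne ((eq_pre_of_mem_cyl hxt).trans (by rw [hlen, ← eq_pre_of_mem_cyl hxu]))


variable {μ : MeasureTheory.Measure (ℕ → Bool)}

lemma measure_biUnion_list {N : ℕ} :
    ∀ (l : List (List Bool)), (∀ t ∈ l, t.length = N) → l.Nodup →
      μ (⋃ t ∈ {u : List Bool | u ∈ l}, cyl t) = (l.map fun t => μ (cyl t)).sum := by
  intro l
  induction l with
  | nil => simp
  | cons a l ih =>
    intro hlen hnd
    have h1 : (⋃ t ∈ {u : List Bool | u ∈ a :: l}, cyl t)
        = cyl a ∪ ⋃ t ∈ {u : List Bool | u ∈ l}, cyl t := by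
      ext z
      simp only [List.mem_cons, Set.mem_iUnion, Set.mem_union, Set.mem_setOf_eq]
      constructor
      · rintro ⟨t, (rfl | ht), hz⟩
        · exact Or.inl hz
        · exact Or.inr ⟨t, ht, hz⟩
      · rintro (hz | ⟨t, ht, hz⟩)
        · exact ⟨a, Or.inl rfl, hz⟩
        · exact ⟨t, Or.inr ht, hz⟩
    rw [h1]
    rw [measure_union ?_ (MeasurableSet.biUnion (Set.to_countable _)
      fun t _ => measurableSet_cyl t)]
    · rw [ih (fun t ht => hlen t (List.mem_cons_of_mem a ht)) hnd.of_cons]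
      simp
    · refine Set.disjoint_iUnion_right.mpr fun t => Set.disjoint_iUnion_right.mpr fun ht => ?_
      exact cyl_disjoint (by rw [hlen a (by simp), hlen t (List.mem_cons_of_mem a ht)])
        (fun h => (List.nodup_cons.mp hnd).1 (h ▸ ht))

lemma sum_map_ofReal {α : Type*} (w : α → ℝ) (hw : ∀ a, 0 ≤ w a) :
    ∀ l : List α, (l.map fun a => ENNReal.ofReal (w a)).sum
      = ENNReal.ofReal ((l.map w).sum) := by
  intro l
  induction l with
  | nil => simp
  | cons a l ih =>
    simp only [List.map_cons, List.sum_cons, ih]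
    rw [ENNReal.ofReal_add (hw a) (List.sum_nonneg (by simpa using fun b _ => hw b))]

def wt (q : ℝ) (t : List Bool) : ℝ := q ^ t.count true * (1 - q) ^ t.count false

lemma wt_nonneg {q : ℝ} (hq : q ∈ Set.Icc (0:ℝ) 1) (t : List Bool) : 0 ≤ wt q t :=
  mul_nonneg (pow_nonneg hq.1 _) (pow_nonneg (by linarith [hq.2]) _)

lemma wt_cons (q : ℝ) (b : Bool) (t : List Bool) :
    wt q (b :: t) = (if b then q else 1 - q) * wt q t := by
  cases b <;> simp [wt, List.count_cons, pow_succ] <;> ring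

lemma sum_comps_wt {q : ℝ} : ∀ p : List (Option Bool),
    ((comps p).map (wt q)).sum
      = q ^ p.count (some true) * (1 - q) ^ p.count (some false) := by
  intro p
  induction p with
  | nil => simp [comps, wt]
  | cons o p ih =>
    match o with
    | some b =>
      simp only [comps, List.map_map]
      have : (wt q ∘ fun t => b :: t) = fun t => (if b then q else 1 - q) * wt q t := by
        funext t; exact wt_cons q b t
      rw [this, List.sum_map_mul_left, ih]
      cases b <;> simp [List.count_cons, pow_succ] <;> ring
    | none =>
      simp only [comps, List.map_append, List.sum_append, List.map_map]
      have h1 : (wt q ∘ fun t => true :: t) = fun t => q * wt q t := by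
        funext t; simpa using wt_cons q true t
      have h2 : (wt q ∘ fun t => false :: t) = fun t => (1 - q) * wt q t := by
        funext t; simpa using wt_cons q false t
      rw [h1, h2, List.sum_map_mul_left, List.sum_map_mul_left, ih]
      simp only [List.count_cons]
      norm_num
      ring

lemma measure_Con {q : ℝ} (hq : q ∈ Set.Icc (0:ℝ) 1)
    (hμ : ∀ s : List Bool, μ (cyl s)
      = ENNReal.ofReal (q ^ (s.count true) * (1 - q) ^ (s.count false)))
    (p : List (Option Bool)) :
    μ (Con p) = ENNReal.ofReal
      (q ^ p.count (some true) * (1 - q) ^ p.count (some false)) := by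
  rw [Con_eq_biUnion, measure_biUnion_list (N := p.length)
    (comps p) (fun t ht => length_of_mem_comps ht) (nodup_comps p)]
  have : ((comps p).map fun t => μ (cyl t))
      = (comps p).map fun t => ENNReal.ofReal (wt q t) := by
    simp only [List.map_inj_left]
    intro t _
    exact hμ t
  rw [this, sum_map_ofReal (wt q) (wt_nonneg hq), sum_comps_wt]


def mfun (y : ℕ → Bool) (s : List Bool) (j : ℕ) : Option Bool :=
  if y j = true then some (s.getD (Nat.count (fun i => y i = true) j) false) else none

def mask (y : ℕ → Bool) (s : List Bool) (m : ℕ) : List (Option Bool) :=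
  List.ofFn fun j : Fin m => mfun y s j.val

lemma count_ofFn_sum {α : Type*} [BEq α] [LawfulBEq α] [DecidableEq α] :
    ∀ {n : ℕ} (f : Fin n → α) (a : α),
      (List.ofFn f).count a = ∑ i : Fin n, if f i = a then 1 else 0 := by
  intro n
  induction n with
  | zero => simp
  | succ n ih =>
    intro f a
    rw [List.ofFn_succ, List.count_cons, ih, Fin.sum_univ_succ]
    simp only [beq_iff_eq]
    omega

lemma count_eq_sum {α : Type*} [BEq α] [LawfulBEq α] [DecidableEq α] (l : List α) (a : α) :
    l.count a = ∑ i : Fin l.length, if l.get i = a then 1 else 0 := by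
  conv_lhs => rw [← List.ofFn_get l]
  rw [count_ofFn_sum]

variable {y : ℕ → Bool}

lemma count_lt_of_lt_nth (hyinf : {i | y i = true}.Infinite) {j c : ℕ}
    (hj : j < Nat.nth (fun i => y i = true) c + 1) :
    Nat.count (fun i => y i = true) j ≤ c := by
  calc Nat.count (fun i => y i = true) j
      ≤ Nat.count (fun i => y i = true) (Nat.nth (fun i => y i = true) c) :=
        Nat.count_monotone _ (Nat.lt_succ_iff.mp hj)
    _ = c := Nat.count_nth_of_infinite hyinf c

lemma count_mask (hyinf : {i | y i = true}.Infinite) {s : List Bool} {c : ℕ}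
    (hc : s.length = c + 1) (b : Bool) :
    (mask y s (Nat.nth (fun i => y i = true) c + 1)).count (some b) = s.count b := by
  rw [mask, count_ofFn_sum, count_eq_sum]
  rw [Finset.sum_boole, Finset.sum_boole, Nat.cast_id, Nat.cast_id]
  refine Finset.card_bij'
    (fun j hj => (⟨Nat.count (fun i => y i = true) j.val, ?_⟩ : Fin s.length))
    (fun i hi => (⟨Nat.nth (fun i => y i = true) i.val, ?_⟩ :
      Fin (Nat.nth (fun i => y i = true) c + 1)))
    ?_ ?_ ?_ ?_
  · rw [hc]
    exact Nat.lt_succ_of_le (count_lt_of_lt_nth hyinf j.isLt)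
  · have hic : (i : ℕ) ≤ c := by
      have := i.isLt; omega
    exact Nat.lt_succ_of_le ((Nat.nth_le_nth hyinf).mpr hic)
  · intro j hj
    simp only [Finset.mem_filter, Finset.mem_univ, true_and] at hj ⊢
    simp only [mfun] at hj ⊢
    by_cases hy : y j.val = true
    · rw [if_pos hy] at hj
      have hb := Option.some_injective _ hj
      have hlt : Nat.count (fun i => y i = true) j.val < s.length := by
        rw [hc]; exact Nat.lt_succ_of_le (count_lt_of_lt_nth hyinf j.isLt)
      rw [← hb, getD_eq_get' _ _ hlt]
    · rw [if_neg hy] at hj; exact absurd hj (by simp)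
  · intro i hi
    simp only [Finset.mem_filter, Finset.mem_univ, true_and] at hi ⊢
    simp only [mfun] at hi ⊢
    rw [if_pos (Nat.nth_mem_of_infinite hyinf i.val),
      Nat.count_nth_of_infinite hyinf, getD_eq_get' _ _ i.isLt, hi]
  · intro j hj
    simp only [Finset.mem_filter, Finset.mem_univ, true_and] at hj
    simp only [mfun] at hj
    apply Fin.ext
    by_cases hy : y j.val = true
    · exact Nat.nth_count hy
    · rw [if_neg hy] at hj; exact absurd hj (by simp)
  · intro i hi
    apply Fin.ext
    exact Nat.count_nth_of_infinite hyinf i.val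


lemma preimage_cyl_eq_Con (hyinf : {i | y i = true}.Infinite) {s : List Bool} {c : ℕ}
    (hc : s.length = c + 1) :
    (fun x => select x y) ⁻¹' cyl s
      = Con (mask y s (Nat.nth (fun i => y i = true) c + 1)) := by
  ext x
  simp only [Set.mem_preimage, cyl, Con, Set.mem_setOf_eq, mask, List.length_ofFn]
  constructor
  · intro h j b hb
    rw [List.get_ofFn] at hb
    simp only [Fin.coe_cast] at hb
    simp only [mfun] at hb
    by_cases hy : y j.val = true
    · rw [if_pos hy] at hb
      have hb' := Option.some_injective _ hb
      have hlt : Nat.count (fun i => y i = true) j.val < s.length := by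
        rw [hc]; exact Nat.lt_succ_of_le (count_lt_of_lt_nth hyinf (by simpa using j.isLt))
      have := h ⟨Nat.count (fun i => y i = true) j.val, hlt⟩
      simp only [select] at this
      rw [Nat.nth_count hy] at this
      rw [this, ← hb', getD_eq_get' _ _ hlt]
    · rw [if_neg hy] at hb; exact absurd hb (by simp)
  · intro h i
    have hik : (i : ℕ) ≤ c := by have := i.isLt; omega
    have hlt : Nat.nth (fun i => y i = true) i.val
        < Nat.nth (fun i => y i = true) c + 1 :=
      Nat.lt_succ_of_le ((Nat.nth_le_nth hyinf).mpr hik)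
    have := h ⟨Nat.nth (fun i => y i = true) i.val, by simpa using hlt⟩ (s.get i) ?_
    · simpa [select] using this
    · rw [List.get_ofFn]
      simp only [Fin.coe_cast]
      simp only [mfun]
      rw [if_pos (Nat.nth_mem_of_infinite hyinf i.val),
        Nat.count_nth_of_infinite hyinf, getD_eq_get' _ _ i.isLt]

variable {q : ℝ}

lemma measure_preimage_cyl {μ : MeasureTheory.Measure (ℕ → Bool)}
    [MeasureTheory.IsProbabilityMeasure μ]
    (hq : q ∈ Set.Icc (0:ℝ) 1)
    (hμ : ∀ s : List Bool, μ (cyl s)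
      = ENNReal.ofReal (q ^ (s.count true) * (1 - q) ^ (s.count false)))
    (hyinf : {i | y i = true}.Infinite) (s : List Bool) :
    μ ((fun x => select x y) ⁻¹' cyl s) = μ (cyl s) := by
  rcases eq_or_ne s [] with rfl | hne
  · simp
  · obtain ⟨c, hc⟩ : ∃ c, s.length = c + 1 :=
      Nat.exists_eq_succ_of_ne_zero (by simpa using hne)
    rw [preimage_cyl_eq_Con hyinf hc, measure_Con hq hμ,
      count_mask hyinf hc true, count_mask hyinf hc false, hμ s]

lemma map_select_eq {μ : MeasureTheory.Measure (ℕ → Bool)}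
    [MeasureTheory.IsProbabilityMeasure μ]
    (hq : q ∈ Set.Icc (0:ℝ) 1)
    (hμ : ∀ s : List Bool, μ (cyl s)
      = ENNReal.ofReal (q ^ (s.count true) * (1 - q) ^ (s.count false)))
    (hyinf : {i | y i = true}.Infinite) :
    μ.map (fun x => select x y) = μ := by
  haveI := MeasureTheory.Measure.isProbabilityMeasure_map
    (μ := μ) (measurable_select (y := y)).aemeasurable
  refine MeasureTheory.ext_of_generate_finite CylSets generateFrom_cylSets
    isPiSystem_cylSets ?_ (by simp)
  rintro S ⟨s, rfl⟩
  rw [MeasureTheory.Measure.map_apply measurable_select (measurableSet_cyl s)]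
  exact measure_preimage_cyl hq hμ hyinf s

lemma measure_preimage_openU {μ : MeasureTheory.Measure (ℕ → Bool)}
    [MeasureTheory.IsProbabilityMeasure μ]
    (hq : q ∈ Set.Icc (0:ℝ) 1)
    (hμ : ∀ s : List Bool, μ (cyl s)
      = ENNReal.ofReal (q ^ (s.count true) * (1 - q) ^ (s.count false)))
    (hyinf : {i | y i = true}.Infinite) (U : ℕ → Set (List Bool)) (n : ℕ) :
    μ ((fun x => select x y) ⁻¹' openU U n) = μ (openU U n) := by
  rw [← MeasureTheory.Measure.map_apply measurable_select (measurableSet_openU U n),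
    map_select_eq hq hμ hyinf]


lemma computable_hsel (hycomp : Computable y) :
    Computable fun t : List Bool => hsel y t t.length := by
  have step : Computable₂ fun (t : List Bool) (p : ℕ × List Bool) =>
      bif y p.1 then p.2 ++ [t.getD p.1 false] else p.2 := by
    apply Computable.cond (hycomp.comp (Computable.fst.comp Computable.snd))
    · exact (Primrec.list_append.comp (Primrec.snd.comp Primrec.snd)
        ((Primrec.list_cons (α := Bool)).comp
          ((Primrec.list_getD false).comp Primrec.fst (Primrec.fst.comp Primrec.snd))
          (Primrec.const []))).to_comp
    · exact Computable.snd.comp Computable.snd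
  exact (Computable.nat_rec Computable.list_length (Computable.const []) step).of_eq
    fun t => by rfl

lemma repred_comp {α β : Type*} [Primcodable α] [Primcodable β]
    {W : β → Prop} (hW : REPred W) {g : α → β} (hg : Computable g) :
    REPred fun a => W (g a) :=
  Partrec.comp hW hg

end S12

/-- Let `q ∈ [0,1]` and let `y` be a computable sequence with
infinitely many 1's. If `x` is ML-random w.r.t. Bernoulli(`q`) relative to `q`,
then so is the selected subsequence `x/y`. -/
theorem stmt12 (q : ℝ) (hq : q ∈ Set.Icc (0 : ℝ) 1)
    (μ : MeasureTheory.Measure (ℕ → Bool)) [MeasureTheory.IsProbabilityMeasure μ]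
    (hμ : IsBernoulli q μ)
    (y : ℕ → Bool) (hycomp : Computable y) (hyinf : {i | y i = true}.Infinite)
    (x : ℕ → Bool) (hx : MLRandomRel q μ x) :
    MLRandomRel q μ (select x y) := by
  have hbern : ∀ s : List Bool, μ (cyl s)
      = ENNReal.ofReal (q ^ (s.count true) * (1 - q) ^ (s.count false)) := hμ
  intro U hU
  obtain ⟨hre, hmono, hbound⟩ := hU
  have hopen : ∀ n, openU (fun k => {t : List Bool | S12.hsel y t t.length ∈ U k}) n
      = (fun x => select x y) ⁻¹' openU U n := fun n => S12.openV_eq hyinf U n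
  have htest : MLTestRel q μ (fun k => {t : List Bool | S12.hsel y t t.length ∈ U k}) := by
    refine ⟨?_, ?_, ?_⟩
    · obtain ⟨W, hW, hWU⟩ := hre
      refine ⟨fun a => W (a.1, (a.2.1, S12.hsel y a.2.2 a.2.2.length)), ?_,
        fun p => hWU (p.1, S12.hsel y p.2 p.2.length)⟩
      exact S12.repred_comp hW
        (Computable.fst.pair ((Computable.fst.comp Computable.snd).pair
          ((S12.computable_hsel hycomp).comp (Computable.snd.comp Computable.snd))))
    · intro n
      rw [hopen n, hopen (n + 1)]
      exact Set.preimage_mono (hmono n)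
    · intro n
      rw [hopen n, S12.measure_preimage_openU hq hbern hyinf U n]
      exact hbound n
  obtain ⟨n, hn⟩ := hx _ htest
  refine ⟨n, fun hmem => hn ?_⟩
  rw [hopen n]
  exact hmem
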